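/- arXiv:2012.01453 — 2 statements merged into one kernel-verified Lean document; each statement's English description precedes it below -/
import Mathlib

section
/- For integers s ≥ 1 and n ≥ 1, the number of ~-equivalence classes of strings of length n over Σ = {m ∈ ℤ : |m| ≤ s} equals Σ_{k=0}^{n} |T_k|, where |T_k| is the number of strings of length k over Σ_* = Σ \ {0} in which no positive letter m is immediately followed by −m. -/
open Finset

/-- The alphabet `Σ = {m ∈ ℤ : |m| ≤ s}`. -/
abbrev SpinLetter (s : ℕ) := {m : ℤ // m ∈ Finset.Icc (-(s : ℤ)) (s : ℤ)}

/-- Strings of length `n` over `Σ`. -/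
abbrev SpinStr (s n : ℕ) := Fin n → SpinLetter s

/-- The single-move relation `R`: exchange `0m ↔ m0` for `m ∈ Σ_*`, or
create/annihilate `00 ↔ m(−m)` for `m ∈ {1,…,s}`, at adjacent positions `k, k+1`. -/
def MoveRel (s n : ℕ) (u v : SpinStr s n) : Prop :=
  ∃ k : ℕ, ∃ hk1 : k + 1 < n,
    (∀ i : Fin n, (i : ℕ) ≠ k → (i : ℕ) ≠ k + 1 → u i = v i) ∧
    ((∃ m : ℤ, m ≠ 0 ∧ |m| ≤ (s : ℤ) ∧
        (((u ⟨k, Nat.lt_of_succ_lt hk1⟩ : ℤ) = 0 ∧ (u ⟨k + 1, hk1⟩ : ℤ) = m ∧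
          (v ⟨k, Nat.lt_of_succ_lt hk1⟩ : ℤ) = m ∧ (v ⟨k + 1, hk1⟩ : ℤ) = 0) ∨
         ((u ⟨k, Nat.lt_of_succ_lt hk1⟩ : ℤ) = m ∧ (u ⟨k + 1, hk1⟩ : ℤ) = 0 ∧
          (v ⟨k, Nat.lt_of_succ_lt hk1⟩ : ℤ) = 0 ∧ (v ⟨k + 1, hk1⟩ : ℤ) = m))) ∨
     (∃ m : ℤ, 1 ≤ m ∧ m ≤ (s : ℤ) ∧
        (((u ⟨k, Nat.lt_of_succ_lt hk1⟩ : ℤ) = 0 ∧ (u ⟨k + 1, hk1⟩ : ℤ) = 0 ∧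
          (v ⟨k, Nat.lt_of_succ_lt hk1⟩ : ℤ) = m ∧ (v ⟨k + 1, hk1⟩ : ℤ) = -m) ∨
         ((u ⟨k, Nat.lt_of_succ_lt hk1⟩ : ℤ) = m ∧ (u ⟨k + 1, hk1⟩ : ℤ) = -m ∧
          (v ⟨k, Nat.lt_of_succ_lt hk1⟩ : ℤ) = 0 ∧ (v ⟨k + 1, hk1⟩ : ℤ) = 0))))

/-- `T_k`: the set of strings `t : Fin k → ℤ` with all letters in
`Σ_* = {m : 1 ≤ |m| ≤ s}` such that no letter `t_j > 0` is immediately followed by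
`t_{j+1} = −t_j`. -/
noncomputable def Tset (s k : ℕ) : Finset (Fin k → ℤ) :=
  letI := Classical.decPred
    (fun t : Fin k → ℤ => (∀ i, t i ≠ 0) ∧
      ∀ (i : Fin k) (h : (i : ℕ) + 1 < k), ¬(0 < t i ∧ t ⟨(i : ℕ) + 1, h⟩ = -t i))
  (Fintype.piFinset fun _ : Fin k => Finset.Icc (-(s : ℤ)) (s : ℤ)).filter
    (fun t => (∀ i, t i ≠ 0) ∧
      ∀ (i : Fin k) (h : (i : ℕ) + 1 < k), ¬(0 < t i ∧ t ⟨(i : ℕ) + 1, h⟩ = -t i))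



/-- one-sided reduction: cancel adjacent `a, -a` with `0 < a` -/
def red : List ℤ → List ℤ
  | [] => []
  | a :: l =>
    match red l with
    | [] => [a]
    | b :: t => if 0 < a ∧ b = -a then t else a :: b :: t

def RP (a b : ℤ) : Prop := ¬(0 < a ∧ b = -a)

lemma red_sublist (l : List ℤ) : List.Sublist (red l) l := by
  induction l with
  | nil => simp [red]
  | cons a l ih =>
    rw [red]
    rcases h : red l with _ | ⟨b, t⟩
    · simp
    · rw [h] at ih
      by_cases hc : 0 < a ∧ b = -a
      · simp only [hc, and_self, if_true]
        exact ((List.sublist_cons_self b t).trans ih).trans (List.sublist_cons_self a l)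
      · simp only [hc, if_false]
        exact List.Sublist.cons₂ a ih

lemma red_reduced (l : List ℤ) : (red l).Chain' RP := by
  induction l with
  | nil => simp [red, List.Chain']
  | cons a l ih =>
    rw [red]
    rcases h : red l with _ | ⟨b, t⟩
    · simp [List.Chain']
    · rw [h] at ih
      by_cases hc : 0 < a ∧ b = -a
      · simp only [hc, and_self, if_true]
        exact ih.tail
      · simp only [hc, if_false]
        exact List.IsChain.cons_cons hc ih

lemma reduced_red (l : List ℤ) (h : l.Chain' RP) : red l = l := by
  induction l with
  | nil => rfl
  | cons a l ih =>
    rw [red, ih h.tail]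
    rcases l with _ | ⟨b, t⟩
    · rfl
    · have : RP a b := List.isChain_cons_cons.mp h |>.1
      simp [RP] at this
      by_cases hc : 0 < a ∧ b = -a
      · exact absurd hc.2 (this hc.1)
      · simp [hc]

lemma red_append_red (l₁ l₂ : List ℤ) : red (l₁ ++ red l₂) = red (l₁ ++ l₂) := by
  induction l₁ with
  | nil => simpa using reduced_red _ (red_reduced l₂)
  | cons a l₁ ih => simp only [List.cons_append, red, List.append_eq, ih]

lemma red_cancel (a : ℤ) (ha : 0 < a) (l₁ l₂ : List ℤ) :
    red (l₁ ++ a :: -a :: l₂) = red (l₁ ++ l₂) := by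
  have h2 : red (a :: -a :: l₂) = red l₂ := by
    have hna : red (-a :: l₂) = -a :: red l₂ := by
      rw [red]
      rcases h : red l₂ with _ | ⟨b, t⟩
      · rfl
      · have hng : ¬(0 < -a ∧ b = -(-a)) := by
          rintro ⟨h1, -⟩; omega
        show (if 0 < -a ∧ b = -(-a) then t else -a :: b :: t) = -a :: (b :: t)
        rw [if_neg hng]
    rw [red, hna]
    show (if 0 < a ∧ -a = -a then red l₂ else _) = red l₂
    rw [if_pos ⟨ha, rfl⟩]
  calc red (l₁ ++ a :: -a :: l₂) = red (l₁ ++ red (a :: -a :: l₂)) :=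
        (red_append_red _ _).symm
    _ = red (l₁ ++ red l₂) := by rw [h2]
    _ = red (l₁ ++ l₂) := red_append_red _ _

open Relation

/-- list-level move -/
def LMove (s : ℕ) (p q : List ℤ) : Prop :=
  ∃ l₁ x y x' y' l₂, p = l₁ ++ x :: y :: l₂ ∧ q = l₁ ++ x' :: y' :: l₂ ∧
    ((∃ m : ℤ, m ≠ 0 ∧ |m| ≤ (s : ℤ) ∧
        ((x = 0 ∧ y = m ∧ x' = m ∧ y' = 0) ∨ (x = m ∧ y = 0 ∧ x' = 0 ∧ y' = m))) ∨
     (∃ m : ℤ, 1 ≤ m ∧ m ≤ (s : ℤ) ∧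
        ((x = 0 ∧ y = 0 ∧ x' = m ∧ y' = -m) ∨ (x = m ∧ y = -m ∧ x' = 0 ∧ y' = 0))))

lemma LMove.length_eq {s : ℕ} {p q : List ℤ} (h : LMove s p q) : p.length = q.length := by
  obtain ⟨l₁, x, y, x', y', l₂, hp, hq, -⟩ := h
  simp [hp, hq]

lemma LMove.bdd {s : ℕ} {p q : List ℤ} (h : LMove s p q)
    (hb : ∀ x ∈ p, |x| ≤ (s : ℤ)) : ∀ x ∈ q, |x| ≤ (s : ℤ) := by
  obtain ⟨l₁, x, y, x', y', l₂, hp, hq, hc⟩ := h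
  subst hp hq
  intro z hz
  simp only [List.mem_append, List.mem_cons] at hz
  rcases hz with h1 | h2 | h3 | h4
  · exact hb z (by simp [h1])
  · rcases hc with ⟨m, hm0, hms, hcase⟩ | ⟨m, hm1, hms, hcase⟩ <;>
      rcases hcase with ⟨-, -, e, -⟩ | ⟨-, -, e, -⟩ <;> subst h2 <;> rw [e] <;>
      first
      | simpa using hms
      | (rw [abs_of_pos (by omega)]; omega)
      | (rw [abs_of_nonpos (by omega)]; omega)
      | simp [abs_of_nonneg, Nat.cast_nonneg]
  · rcases hc with ⟨m, hm0, hms, hcase⟩ | ⟨m, hm1, hms, hcase⟩ <;>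
      rcases hcase with ⟨-, -, -, e⟩ | ⟨-, -, -, e⟩ <;> subst h3 <;> rw [e] <;>
      first
      | simpa using hms
      | (rw [abs_of_pos (by omega)]; omega)
      | (rw [abs_neg]; rw [abs_of_pos (by omega)]; omega)
      | (rw [abs_of_nonpos (by omega)]; omega)
      | simp [abs_of_nonneg, Nat.cast_nonneg]
  · exact hb z (by simp [h4])

lemma LMove.cons {s : ℕ} {p q : List ℤ} (a : ℤ) (h : LMove s p q) :
    LMove s (a :: p) (a :: q) := by
  obtain ⟨l₁, x, y, x', y', l₂, hp, hq, hc⟩ := h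
  exact ⟨a :: l₁, x, y, x', y', l₂, by simp [hp], by simp [hq], hc⟩

lemma RTG_cons {s : ℕ} {p q : List ℤ} (a : ℤ)
    (h : ReflTransGen (LMove s) p q) : ReflTransGen (LMove s) (a :: p) (a :: q) := by
  induction h with
  | refl => exact ReflTransGen.refl
  | tail _ hstep ih => exact ih.tail (hstep.cons a)

lemma move_zero {s : ℕ} {a : ℤ} (ha : a ≠ 0) (hb : |a| ≤ (s : ℤ)) (l : List ℤ) :
    LMove s (0 :: a :: l) (a :: 0 :: l) :=
  ⟨[], 0, a, a, 0, l, rfl, rfl, Or.inl ⟨a, ha, hb, Or.inl ⟨rfl, rfl, rfl, rfl⟩⟩⟩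

lemma move_pair {s : ℕ} {m : ℤ} (h1 : 1 ≤ m) (h2 : m ≤ (s : ℤ)) (l : List ℤ) :
    LMove s (m :: -m :: l) (0 :: 0 :: l) :=
  ⟨[], m, -m, 0, 0, l, rfl, rfl, Or.inr ⟨m, h1, h2, Or.inr ⟨rfl, rfl, rfl, rfl⟩⟩⟩

lemma zeros_past {s : ℕ} (F : List ℤ) (hF : ∀ x ∈ F, x ≠ 0 ∧ |x| ≤ (s : ℤ))
    (Z : List ℤ) : ReflTransGen (LMove s) (0 :: (F ++ Z)) (F ++ 0 :: Z) := by
  induction F with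
  | nil => exact ReflTransGen.refl
  | cons a F ih =>
    have ha := hF a (by simp)
    refine ReflTransGen.head (move_zero ha.1 ha.2 (F ++ Z)) ?_
    exact RTG_cons a (ih fun x hx => hF x (by simp [hx]))

/-- the invariant -/
def invL (l : List ℤ) : List ℤ := red (l.filter (· ≠ 0))

lemma invL_move {s : ℕ} {p q : List ℤ} (h : LMove s p q) : invL p = invL q := by
  obtain ⟨l₁, x, y, x', y', l₂, hp, hq, hc⟩ := h
  subst hp hq
  unfold invL
  rcases hc with ⟨m, hm0, hms, hcase⟩ | ⟨m, hm1, hms, hcase⟩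
  · rcases hcase with ⟨e1, e2, e3, e4⟩ | ⟨e1, e2, e3, e4⟩ <;> subst e1 e2 e3 e4 <;>
      simp [List.filter_append, hm0]
  · have hm0 : m ≠ 0 := by omega
    have hmneg : -m ≠ 0 := by omega
    rcases hcase with ⟨e1, e2, e3, e4⟩ | ⟨e1, e2, e3, e4⟩
    · rw [e1, e2, e3, e4]
      simp only [List.filter_append, List.filter_cons, decide_not]
      simp [hm0, hmneg]
      exact (red_cancel m (by omega) _ _).symm
    · rw [e1, e2, e3, e4]
      simp only [List.filter_append, List.filter_cons, decide_not]
      simp [hm0, hmneg]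
      exact red_cancel m (by omega) _ _

lemma RTG_length {s : ℕ} {p q : List ℤ} (h : ReflTransGen (LMove s) p q) :
    p.length = q.length := by
  induction h with
  | refl => rfl
  | tail _ hstep ih => exact ih.trans hstep.length_eq

lemma to_filter {s : ℕ} (l : List ℤ) (hb : ∀ x ∈ l, |x| ≤ (s : ℤ)) :
    ∃ z, ReflTransGen (LMove s) l (l.filter (· ≠ 0) ++ List.replicate z 0) := by
  induction l with
  | nil => exact ⟨0, ReflTransGen.refl⟩
  | cons a l ih =>
    obtain ⟨z, hz⟩ := ih fun x hx => hb x (by simp [hx])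
    by_cases ha : a = 0
    · subst ha
      refine ⟨z + 1, ?_⟩
      have h1 : ReflTransGen (LMove s) ((0:ℤ) :: l)
          (0 :: (l.filter (· ≠ 0) ++ List.replicate z 0)) := RTG_cons 0 hz
      refine h1.trans ?_
      have h2 := zeros_past (s := s) (l.filter (· ≠ 0))
        (fun x hx => ⟨by simpa using (List.of_mem_filter hx),
          hb x (List.mem_cons_of_mem _ (List.mem_of_mem_filter hx))⟩) (List.replicate z 0)
      simpa [List.filter_cons, List.replicate_succ] using h2
    · refine ⟨z, ?_⟩
      have h1 : ReflTransGen (LMove s) (a :: l)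
          (a :: (l.filter (· ≠ 0) ++ List.replicate z 0)) := RTG_cons a hz
      simpa [List.filter_cons, ha] using h1

lemma to_red {s : ℕ} (F : List ℤ) (hF : ∀ x ∈ F, x ≠ 0 ∧ |x| ≤ (s : ℤ)) (z : ℕ) :
    ∃ z', ReflTransGen (LMove s) (F ++ List.replicate z 0)
      (red F ++ List.replicate z' 0) := by
  induction F generalizing z with
  | nil => exact ⟨z, ReflTransGen.refl⟩
  | cons a F ih =>
    obtain ⟨z', hz'⟩ := ih (fun x hx => hF x (by simp [hx])) z
    have ha := hF a (by simp)
    have step1 : ReflTransGen (LMove s) (a :: F ++ List.replicate z 0)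
        (a :: (red F ++ List.replicate z' 0)) := RTG_cons a hz'
    rw [red]
    rcases h : red F with _ | ⟨b, t⟩
    · rw [h] at step1
      exact ⟨z', by simpa using step1⟩
    · rw [h] at step1
      have htmem : ∀ x ∈ b :: t, x ≠ 0 ∧ |x| ≤ (s : ℤ) := by
        intro x hx
        exact hF x (List.mem_cons_of_mem a ((red_sublist F).mem (by rw [h]; exact hx)))
      by_cases hc : 0 < a ∧ b = -a
      · simp only [hc, and_self, if_true]
        refine ⟨z' + 2, ?_⟩
        refine step1.trans ?_
        have hstep : LMove s (a :: b :: t ++ List.replicate z' 0)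
            (0 :: 0 :: t ++ List.replicate z' 0) := by
          rw [hc.2]
          exact move_pair (by omega) (by have := ha.2; rw [abs_of_pos hc.1] at this; omega) _
        refine ReflTransGen.head (by simpa using hstep) ?_
        have htm : ∀ x ∈ t, x ≠ 0 ∧ |x| ≤ (s : ℤ) := fun x hx => htmem x (by simp [hx])
        have m1 : ReflTransGen (LMove s) ((0:ℤ) :: (0 :: (t ++ List.replicate z' 0)))
            (0 :: (t ++ 0 :: List.replicate z' 0)) :=
          RTG_cons 0 (zeros_past t htm _)
        have m2 : ReflTransGen (LMove s) ((0:ℤ) :: (t ++ 0 :: List.replicate z' 0))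
            (t ++ 0 :: 0 :: List.replicate z' 0) := zeros_past t htm _
        refine (m1.trans m2).trans ?_
        have hrep : List.replicate (z' + 2) (0:ℤ) = 0 :: 0 :: List.replicate z' 0 := by
          simp [List.replicate_succ]
        rw [hrep]
      · simp only [hc, if_false]
        exact ⟨z', by simpa using step1⟩

lemma to_normal {s : ℕ} (l : List ℤ) (hb : ∀ x ∈ l, |x| ≤ (s : ℤ)) :
    ∃ z, ReflTransGen (LMove s) l (invL l ++ List.replicate z 0) := by
  obtain ⟨z, h1⟩ := to_filter l hb
  obtain ⟨z', h2⟩ := to_red (s := s) (l.filter (· ≠ 0))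
    (fun x hx => ⟨by simpa using (List.of_mem_filter hx),
      hb x (List.mem_of_mem_filter hx)⟩) z
  exact ⟨z', h1.trans h2⟩

lemma invL_rtg {s : ℕ} {p q : List ℤ} (h : ReflTransGen (LMove s) p q) :
    invL p = invL q := by
  induction h with
  | refl => rfl
  | tail _ hstep ih => exact ih.trans (invL_move hstep)

def intList {s n : ℕ} (u : SpinStr s n) : List ℤ := List.ofFn fun i => (u i : ℤ)

lemma intList_length {s n : ℕ} (u : SpinStr s n) : (intList u).length = n := by
  simp [intList]

lemma intList_getElem {s n : ℕ} (u : SpinStr s n) (i : ℕ) (h : i < n) :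
    (intList u)[i]'(by simpa [intList] using h) = (u ⟨i, h⟩ : ℤ) := by
  simp [intList]

lemma intList_bdd {s n : ℕ} (u : SpinStr s n) : ∀ x ∈ intList u, |x| ≤ (s : ℤ) := by
  intro x hx
  simp only [intList, List.mem_ofFn] at hx
  obtain ⟨i, rfl⟩ := hx
  have := (u i).2
  rw [Finset.mem_Icc] at this
  rw [abs_le]
  exact this

lemma intList_inj {s n : ℕ} {u v : SpinStr s n} (h : intList u = intList v) : u = v := by
  funext i
  apply Subtype.ext
  have := congrArg (fun l => l[(i:ℕ)]?) h
  simpa [intList, List.getElem?_ofFn, i.2] using this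

/-- decomposition of intList around positions k, k+1 -/
lemma intList_decomp {s n : ℕ} (u : SpinStr s n) (k : ℕ) (hk1 : k + 1 < n) :
    intList u = (intList u).take k ++ (u ⟨k, Nat.lt_of_succ_lt hk1⟩ : ℤ) ::
      (u ⟨k + 1, hk1⟩ : ℤ) :: (intList u).drop (k + 2) := by
  have hlen : (intList u).length = n := intList_length u
  have h1 : k < (intList u).length := by omega
  have h2 : k + 1 < (intList u).length := by omega
  conv_lhs => rw [← List.take_append_drop k (intList u)]
  congr 1
  rw [List.drop_eq_getElem_cons h1, intList_getElem u k (by omega)]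
  congr 1
  rw [List.drop_eq_getElem_cons h2, intList_getElem u (k+1) (by omega)]

lemma MoveRel.toLMove {s n : ℕ} {u v : SpinStr s n} (h : MoveRel s n u v) :
    LMove s (intList u) (intList v) := by
  obtain ⟨k, hk1, hagree, hc⟩ := h
  have hdu := intList_decomp u k hk1
  have hdv := intList_decomp v k hk1
  have hlenu : (intList u).length = n := intList_length u
  have hlenv : (intList v).length = n := intList_length v
  have htake : (intList u).take k = (intList v).take k := by
    apply List.ext_getElem (by simp [hlenu, hlenv])
    intro i hi1 hi2
    rw [List.getElem_take, List.getElem_take]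
    have hik : i < k := by simp [hlenu] at hi1; omega
    have hin : i < n := by omega
    rw [intList_getElem u i hin, intList_getElem v i hin]
    exact congrArg _ (hagree ⟨i, hin⟩ (by simpa using Nat.ne_of_lt hik)
      (by simp; omega))
  have hdrop : (intList u).drop (k+2) = (intList v).drop (k+2) := by
    apply List.ext_getElem (by simp [hlenu, hlenv])
    intro i hi1 hi2
    rw [List.getElem_drop, List.getElem_drop]
    have hin : k + 2 + i < n := by simp [hlenu] at hi1; omega
    rw [intList_getElem u _ hin, intList_getElem v _ hin]
    exact congrArg _ (hagree ⟨k+2+i, hin⟩ (by simp; omega) (by simp; omega))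
  refine ⟨(intList u).take k, (u ⟨k, Nat.lt_of_succ_lt hk1⟩ : ℤ), (u ⟨k+1, hk1⟩ : ℤ),
    (v ⟨k, Nat.lt_of_succ_lt hk1⟩ : ℤ), (v ⟨k+1, hk1⟩ : ℤ),
    (intList u).drop (k+2), hdu, ?_, ?_⟩
  · rw [hdv, htake, hdrop]
  · rcases hc with ⟨m, h1, h2, hcase⟩ | ⟨m, h1, h2, hcase⟩
    · exact Or.inl ⟨m, h1, h2, by tauto⟩
    · exact Or.inr ⟨m, h1, h2, by tauto⟩

lemma getElem_mid0 (l₁ : List ℤ) (x y : ℤ) (l₂ : List ℤ) :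
    (l₁ ++ x :: y :: l₂)[l₁.length]'(by
      simp only [List.length_append, List.length_cons]; omega) = x := by
  rw [List.getElem_append_right (le_refl _)]
  simp

lemma getElem_mid1 (l₁ : List ℤ) (x y : ℤ) (l₂ : List ℤ) :
    (l₁ ++ x :: y :: l₂)[l₁.length + 1]'(by
      simp only [List.length_append, List.length_cons]; omega) = y := by
  rw [List.getElem_append_right (by omega)]
  simp

lemma getElem_mid_left (l₁ : List ℤ) (x y : ℤ) (l₂ : List ℤ) (i : ℕ) (h : i < l₁.length) :
    (l₁ ++ x :: y :: l₂)[i]'(by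
      simp only [List.length_append, List.length_cons]; omega) = l₁[i] :=
  List.getElem_append_left h

lemma getElem_mid_right (l₁ : List ℤ) (x y : ℤ) (l₂ : List ℤ) (j : ℕ) (hj : j < l₂.length) :
    (l₁ ++ x :: y :: l₂)[l₁.length + 2 + j]'(by
      simp only [List.length_append, List.length_cons]; omega) = l₂[j] := by
  rw [List.getElem_append_right (by omega)]
  have h2 : l₁.length + 2 + j - l₁.length = j + 2 := by omega
  simp only [h2, List.getElem_cons_succ]

/-- convert a bounded list of length n into a SpinStr -/
def listStr {s n : ℕ} (w : List ℤ) (hlen : w.length = n)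
    (hb : ∀ x ∈ w, |x| ≤ (s : ℤ)) : SpinStr s n :=
  fun i => ⟨w[(i : ℕ)]'(by omega), by
    rw [Finset.mem_Icc]
    exact abs_le.mp (hb _ (List.getElem_mem _))⟩

lemma intList_listStr {s n : ℕ} (w : List ℤ) (hlen : w.length = n)
    (hb : ∀ x ∈ w, |x| ≤ (s : ℤ)) : intList (listStr w hlen hb) = w := by
  apply List.ext_getElem (by simp [intList, hlen])
  intro i h1 h2
  rw [intList_getElem _ i (by simpa [intList] using h1)]
  rfl

lemma LMove.lift {s n : ℕ} (u : SpinStr s n) (w : List ℤ) (h : LMove s (intList u) w) :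
    ∃ v : SpinStr s n, intList v = w ∧ MoveRel s n u v := by
  have hb : ∀ x ∈ w, |x| ≤ (s : ℤ) := h.bdd (intList_bdd u)
  have hlen : w.length = n := by rw [← h.length_eq, intList_length]
  refine ⟨listStr w hlen hb, intList_listStr w hlen hb, ?_⟩
  obtain ⟨l₁, x, y, x', y', l₂, hp, hq, hc⟩ := h
  set k := l₁.length with hkdef
  have hplen : (intList u).length = l₁.length + (l₂.length + 1 + 1) := by
    rw [hp]; simp
  have hn : n = k + 2 + l₂.length := by
    rw [← intList_length u, hplen]; omega
  have hk1 : k + 1 < n := by omega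
  have hvcoe : ∀ (i : ℕ) (hi : i < n), (listStr w hlen hb ⟨i, hi⟩ : ℤ) = w[i]'(by omega) := by
    intro i hi; rfl
  have hucoe : ∀ (i : ℕ) (hi : i < n),
      (u ⟨i, hi⟩ : ℤ) = (intList u)[i]'(by rw [intList_length]; omega) :=
    fun i hi => (intList_getElem u i hi).symm
  have hu0 : (u ⟨k, Nat.lt_of_succ_lt hk1⟩ : ℤ) = x := by
    rw [hucoe k (by omega)]; simp only [hp]; exact getElem_mid0 l₁ x y l₂
  have hu1 : (u ⟨k + 1, hk1⟩ : ℤ) = y := by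
    rw [hucoe (k+1) (by omega)]; simp only [hp]; exact getElem_mid1 l₁ x y l₂
  have hv0 : (listStr w hlen hb ⟨k, Nat.lt_of_succ_lt hk1⟩ : ℤ) = x' := by
    rw [hvcoe k (by omega)]; simp only [hq]; exact getElem_mid0 l₁ x' y' l₂
  have hv1 : (listStr w hlen hb ⟨k + 1, hk1⟩ : ℤ) = y' := by
    rw [hvcoe (k+1) (by omega)]; simp only [hq]; exact getElem_mid1 l₁ x' y' l₂
  refine ⟨k, hk1, ?_, ?_⟩
  · intro i hik hik1
    apply Subtype.ext
    have hin : (i : ℕ) < n := i.2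
    have : u i = u ⟨(i : ℕ), hin⟩ := by congr
    rw [this, show (listStr w hlen hb) i = listStr w hlen hb ⟨(i : ℕ), hin⟩ from by congr]
    show ((u ⟨(i : ℕ), hin⟩ : ℤ)) = ((listStr w hlen hb ⟨(i : ℕ), hin⟩ : ℤ))
    rw [hucoe _ hin, hvcoe _ hin]
    rcases lt_or_ge (i : ℕ) k with hik' | hik'
    · simp only [hp, hq]
      rw [getElem_mid_left l₁ x y l₂ _ hik', getElem_mid_left l₁ x' y' l₂ _ hik']
    · have hge : k + 2 ≤ (i : ℕ) := by omega
      obtain ⟨j, hj⟩ : ∃ j, (i : ℕ) = k + 2 + j := ⟨(i : ℕ) - k - 2, by omega⟩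
      have hjl : j < l₂.length := by omega
      simp only [hp, hq, hj]
      rw [getElem_mid_right l₁ x y l₂ _ hjl, getElem_mid_right l₁ x' y' l₂ _ hjl]
  · rcases hc with ⟨m, hm0, hms, hcase⟩ | ⟨m, hm0, hms, hcase⟩
    · refine Or.inl ⟨m, hm0, hms, ?_⟩
      rcases hcase with ⟨e1, e2, e3, e4⟩ | ⟨e1, e2, e3, e4⟩
      · exact Or.inl ⟨by omega, by omega, by rw [hv0]; omega, by rw [hv1]; omega⟩
      · exact Or.inr ⟨by omega, by omega, by rw [hv0]; omega, by rw [hv1]; omega⟩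
    · refine Or.inr ⟨m, hm0, hms, ?_⟩
      rcases hcase with ⟨e1, e2, e3, e4⟩ | ⟨e1, e2, e3, e4⟩
      · exact Or.inl ⟨by omega, by omega, by rw [hv0]; omega, by rw [hv1]; omega⟩
      · exact Or.inr ⟨by omega, by omega, by rw [hv0]; omega, by rw [hv1]; omega⟩

open Relation in
lemma eqvGen_invL {s n : ℕ} {u v : SpinStr s n} (h : EqvGen (MoveRel s n) u v) :
    invL (intList u) = invL (intList v) := by
  induction h with
  | rel _ _ h => exact invL_move h.toLMove
  | refl _ => rfl
  | symm _ _ _ ih => exact ih.symm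
  | trans _ _ _ _ _ ih1 ih2 => exact ih1.trans ih2

open Relation in
lemma rtg_lift {s n : ℕ} (u : SpinStr s n) {w : List ℤ}
    (h : ReflTransGen (LMove s) (intList u) w) :
    ∃ v : SpinStr s n, intList v = w ∧ EqvGen (MoveRel s n) u v := by
  induction h with
  | refl => exact ⟨u, rfl, EqvGen.refl u⟩
  | tail hst hstep ih =>
    obtain ⟨v, rfl, hv⟩ := ih
    obtain ⟨v', hv', hm⟩ := LMove.lift v _ hstep
    exact ⟨v', hv', hv.trans _ _ _ (EqvGen.rel _ _ hm)⟩

open Relation in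
lemma exists_normal {s n : ℕ} (u : SpinStr s n) :
    ∃ v : SpinStr s n, EqvGen (MoveRel s n) u v ∧
      intList v = invL (intList u) ++
        List.replicate (n - (invL (intList u)).length) 0 := by
  obtain ⟨z, hz⟩ := to_normal (intList u) (intList_bdd u)
  obtain ⟨v, hv, he⟩ := rtg_lift u hz
  have hlen : n = (invL (intList u)).length + z := by
    have h1 := RTG_length hz
    rw [intList_length] at h1
    simpa using h1
  refine ⟨v, he, ?_⟩
  rw [hv, show n - (invL (intList u)).length = z from by omega]

lemma invL_nonzero (p : List ℤ) : ∀ x ∈ invL p, x ≠ 0 := fun x hx => by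
  have h1 := (red_sublist _).mem hx
  simpa using List.of_mem_filter h1

lemma invL_bdd {s : ℕ} (p : List ℤ) (hb : ∀ x ∈ p, |x| ≤ (s : ℤ)) :
    ∀ x ∈ invL p, |x| ≤ (s : ℤ) := fun x hx =>
  hb x (List.mem_of_mem_filter ((red_sublist _).mem hx))

lemma invL_length_le (p : List ℤ) : (invL p).length ≤ p.length :=
  ((red_sublist _).length_le).trans (List.length_filter_le _ _)

lemma invL_reduced (p : List ℤ) : (invL p).Chain' RP := red_reduced _

lemma invL_padded (l : List ℤ) (hnz : ∀ x ∈ l, x ≠ 0) (hred : l.Chain' RP) (z : ℕ) :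
    invL (l ++ List.replicate z 0) = l := by
  unfold invL
  rw [List.filter_append, List.filter_eq_self.mpr (fun a ha => by simpa using hnz a ha)]
  have hz : (List.replicate z (0 : ℤ)).filter (· ≠ 0) = [] := by
    induction z with
    | zero => rfl
    | succ z ih => simp only [List.replicate_succ, List.filter_cons]; simpa using ih
  rw [hz, List.append_nil]
  exact reduced_red l hred

lemma mem_Tset {s k : ℕ} {t : Fin k → ℤ} :
    t ∈ Tset s k ↔ (∀ i, t i ∈ Finset.Icc (-(s : ℤ)) (s : ℤ)) ∧ ((∀ i, t i ≠ 0) ∧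
      ∀ (i : Fin k) (h : (i : ℕ) + 1 < k), ¬(0 < t i ∧ t ⟨(i : ℕ) + 1, h⟩ = -t i)) := by
  unfold Tset
  letI inst := Classical.decPred
    (fun t : Fin k → ℤ => (∀ i, t i ≠ 0) ∧
      ∀ (i : Fin k) (h : (i : ℕ) + 1 < k), ¬(0 < t i ∧ t ⟨(i : ℕ) + 1, h⟩ = -t i))
  exact (@Finset.mem_filter _ _ inst _ _).trans (and_congr_left' Fintype.mem_piFinset)

lemma chain'_ofFn_iff {k : ℕ} (t : Fin k → ℤ) :
    (List.ofFn t).Chain' RP ↔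
      ∀ (i : Fin k) (h : (i : ℕ) + 1 < k), ¬(0 < t i ∧ t ⟨(i : ℕ) + 1, h⟩ = -t i) := by
  show List.IsChain RP (List.ofFn t) ↔ _
  rw [List.isChain_iff_getElem]
  constructor
  · intro H i h
    have h2 : (i : ℕ) + 1 < (List.ofFn t).length := by simp; omega
    have := H (i : ℕ) h2
    simpa [List.get_ofFn, RP, Fin.cast, Fin.eta] using this
  · intro H i h
    have h2 : i + 1 < k := by rw [List.length_ofFn] at h; omega
    have := H ⟨i, by omega⟩ h2
    simpa [List.get_ofFn, RP, Fin.cast, Fin.eta] using this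

noncomputable def padStr (s n : ℕ) (l : List ℤ) (hb : ∀ x ∈ l, |x| ≤ (s : ℤ))
    (hln : l.length ≤ n) : SpinStr s n :=
  listStr (l ++ List.replicate (n - l.length) 0)
    (by simp; omega)
    (by intro x hx
        rcases List.mem_append.mp hx with h | h
        · exact hb x h
        · simp [List.eq_of_mem_replicate h])

lemma intList_padStr {s n : ℕ} (l : List ℤ) (hb : ∀ x ∈ l, |x| ≤ (s : ℤ))
    (hln : l.length ≤ n) :
    intList (padStr s n l hb hln) = l ++ List.replicate (n - l.length) 0 :=
  intList_listStr _ _ _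

open Relation

theorem stmt_13 (s n : ℕ) (hs : 1 ≤ s) (hn : 1 ≤ n) :
    Nat.card (Quotient (Relation.EqvGen.setoid (MoveRel s n)))
      = ∑ k ∈ Finset.range (n + 1), (Tset s k).card := by
  classical
  set St := Relation.EqvGen.setoid (MoveRel s n) with hSt
  let NT := Σ k : Fin (n + 1), {t : Fin (k : ℕ) → ℤ // t ∈ Tset s (k : ℕ)}
  have memTprops : ∀ (k : ℕ) (t : Fin k → ℤ), t ∈ Tset s k →
      (∀ x ∈ List.ofFn t, |x| ≤ (s : ℤ)) ∧ (∀ x ∈ List.ofFn t, x ≠ 0) ∧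
        (List.ofFn t).Chain' RP := by
    intro k t ht
    obtain ⟨h1, h2, h3⟩ := mem_Tset.mp ht
    refine ⟨?_, ?_, (chain'_ofFn_iff t).mpr h3⟩
    · intro x hx
      rw [List.mem_ofFn] at hx; obtain ⟨i, rfl⟩ := hx
      have := h1 i; rw [Finset.mem_Icc] at this; rw [abs_le]; exact this
    · intro x hx
      rw [List.mem_ofFn] at hx; obtain ⟨i, rfl⟩ := hx
      exact h2 i
  have hlenle : ∀ a : NT, (List.ofFn a.2.1).length ≤ n := by
    intro a; simp only [List.length_ofFn]; exact Nat.lt_succ_iff.mp a.1.2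
  let G : NT → Quotient St := fun a =>
    Quotient.mk St (padStr s n (List.ofFn a.2.1) (memTprops _ _ a.2.2).1 (hlenle a))
  have hGinv : ∀ a : NT,
      invL (intList (padStr s n (List.ofFn a.2.1) (memTprops _ _ a.2.2).1 (hlenle a)))
        = List.ofFn a.2.1 := by
    intro a
    rw [intList_padStr]
    exact invL_padded _ (memTprops _ _ a.2.2).2.1 (memTprops _ _ a.2.2).2.2 _
  have hGbij : Function.Bijective G := by
    constructor
    · rintro ⟨⟨k, hk⟩, t, ht⟩ ⟨⟨k', hk'⟩, t', ht'⟩ h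
      have heqv : EqvGen (MoveRel s n) _ _ := Quotient.exact h
      have hofn : List.ofFn t = List.ofFn t' := by
        have := eqvGen_invL heqv
        rwa [hGinv ⟨⟨k, hk⟩, t, ht⟩, hGinv ⟨⟨k', hk'⟩, t', ht'⟩] at this
      have hkk : k = k' := by
        have := congrArg List.length hofn; simpa using this
      subst hkk
      have htt : t = t' := List.ofFn_injective hofn
      subst htt
      rfl
    · intro q
      obtain ⟨u, rfl⟩ := Quotient.exists_rep q
      set l := invL (intList u) with hl
      have hred : l.Chain' RP := invL_reduced _
      have hnz : ∀ x ∈ l, x ≠ 0 := invL_nonzero _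
      have hbd : ∀ x ∈ l, |x| ≤ (s : ℤ) := invL_bdd _ (intList_bdd u)
      have hlen : l.length ≤ n := le_trans (invL_length_le _) (le_of_eq (intList_length u))
      have hofn : List.ofFn (fun i : Fin l.length => l[(i : ℕ)]) = l := List.ofFn_getElem
      have hmem : (fun i : Fin l.length => l[(i : ℕ)]) ∈ Tset s l.length := by
        rw [mem_Tset]
        refine ⟨fun i => by rw [Finset.mem_Icc]; exact abs_le.mp (hbd _ (List.getElem_mem _)),
          fun i => hnz _ (List.getElem_mem _), ?_⟩
        have := (chain'_ofFn_iff (fun i : Fin l.length => l[(i : ℕ)])).mp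
          (by rw [hofn]; exact hred)
        exact this
      refine ⟨⟨⟨l.length, by omega⟩, ⟨fun i => l[(i : ℕ)]'(i.2), hmem⟩⟩, ?_⟩
      obtain ⟨v, hv, hvl⟩ := exists_normal u
      have hpadv : padStr s n (List.ofFn (fun i : Fin l.length => l[(i : ℕ)]))
          (memTprops _ _ hmem).1 (by simpa [hofn] using hlen) = v := by
        apply intList_inj
        rw [intList_padStr, hvl, hofn]
      show Quotient.mk St _ = Quotient.mk St u
      apply Quotient.sound
      have : EqvGen (MoveRel s n) u v := hv
      -- padStr ... = v up to proof irrelevance of arguments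
      have hpad2 : padStr s n (List.ofFn (fun i : Fin l.length => l[(i : ℕ)]))
          (memTprops _ _ hmem).1 (hlenle ⟨⟨l.length, by omega⟩, ⟨fun i => l[(i : ℕ)]'(i.2), hmem⟩⟩) = v := hpadv
      exact hpad2 ▸ (this.symm _ _)
  have hcard : Nat.card NT = ∑ k ∈ Finset.range (n + 1), (Tset s k).card := by
    rw [Nat.card_eq_fintype_card, Fintype.card_sigma,
      ← Fin.sum_univ_eq_sum_range (fun k => (Tset s k).card) (n + 1)]
    exact Finset.sum_congr rfl (fun k _ => Fintype.card_coe _)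
  rw [← Nat.card_eq_of_bijective G hGbij, hcard]
end

section
/- (Finite core of the linear-distance ground-space code theorem) Let s ≥ 1, t ≥ 1, n ≥ 1 be integers with 2t + 1 ≤ n, set q = 2s+1, and suppose 2^n ≥ 2·V_2(2t)·V_q(2t), where V_q(r) = Σ_{w=0}^{r} C(n,w)(q−1)^w. Then there exist a set C of q-ary strings of length n all of whose letters lie in the two-element set {1, 2} ⊆ ZMod q (in particular, no positive letter m is ever followed by −m, so the corresponding basis states lie in the ground space of the Hamiltonian H_n), together with disjoint nonempty subsets C_0, C_1 ⊆ C and unit vectors ψ_0 = Σ_{c∈C_0} α_c e_c and ψ_1 = Σ_{c∈C_1} β_c e_c with nonnegative real coefficients, such that for all q-ary strings a, b of length n with wt(a) ≤ 2t and wt(b) ≤ 2t: ⟨ψ_0, (X^a Z^b) ψ_1⟩ = 0 and ⟨ψ_0, (X^a Z^b) ψ_0⟩ = ⟨ψ_1, (X^a Z^b) ψ_1⟩ (the Knill–Laflamme conditions for a quantum code of distance 2t+1 correcting t errors). -/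
open Finset

/-- The primitive `q`-th root of unity `ω = exp(2πi/q)`. -/
noncomputable def omegaQ (q : ℕ) : ℂ := Complex.exp (2 * Real.pi * Complex.I / q)

/-- The generalized Pauli operator `X^a Z^b`, determined by
`(X^a Z^b) e_c = ω^{b·c} e_{c−a}`. -/
noncomputable def pauliXZ (n q : ℕ) [NeZero q] (a b : Fin n → ZMod q) :
    EuclideanSpace ℂ (Fin n → ZMod q) →ₗ[ℂ] EuclideanSpace ℂ (Fin n → ZMod q) where
  toFun ψ := WithLp.toLp 2 (fun d => omegaQ q ^ (∑ i, b i * (d i + a i)).val * ψ (d + a))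
  map_add' ψ φ := by ext d; simp [mul_add]
  map_smul' r ψ := by ext d; simp <;> ring

/-- `V_q(r) = Σ_{w=0}^{r} C(n,w)(q−1)^w`, the volume of the `q`-ary Hamming ball
of radius `r` in length `n`. -/
def hammingBallVol (n q r : ℕ) : ℕ := ∑ w ∈ Finset.range (r + 1), n.choose w * (q - 1) ^ w

/-! ### Auxiliary material -/

noncomputable def chiQ (q : ℕ) (x : ZMod q) : ℂ := omegaQ q ^ x.val

lemma omegaQ_eq (q : ℕ) : omegaQ q = Complex.exp (((2 * Real.pi / q : ℝ) : ℂ) * Complex.I) := by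
  unfold omegaQ; push_cast; ring_nf

lemma abs_omegaQ (q : ℕ) : ‖omegaQ q‖ = 1 := by
  rw [omegaQ_eq]; exact Complex.norm_exp_ofReal_mul_I _

lemma omegaQ_pow_q (q : ℕ) [NeZero q] : omegaQ q ^ q = 1 := by
  rw [omegaQ, ← Complex.exp_nat_mul]
  have hq : (q : ℂ) ≠ 0 := Nat.cast_ne_zero.mpr (NeZero.ne q)
  rw [show (q : ℂ) * (2 * Real.pi * Complex.I / q) = 2 * Real.pi * Complex.I by field_simp]
  exact Complex.exp_two_pi_mul_I

lemma chiQ_add (q : ℕ) [NeZero q] (x y : ZMod q) : chiQ q (x + y) = chiQ q x * chiQ q y := by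
  unfold chiQ
  rw [ZMod.val_add, ← pow_eq_pow_mod _ (omegaQ_pow_q q), pow_add]

lemma chiQ_zero (q : ℕ) [NeZero q] : chiQ q 0 = 1 := by
  unfold chiQ; simp [ZMod.val_zero]

lemma conj_chiQ (q : ℕ) [NeZero q] (x : ZMod q) : (starRingEnd ℂ) (chiQ q x) = chiQ q (-x) := by
  have h1 : chiQ q (-x) * chiQ q x = 1 := by
    rw [← chiQ_add, neg_add_cancel, chiQ_zero]
  have habs : ‖chiQ q x‖ = 1 := by
    unfold chiQ
    rw [norm_pow, abs_omegaQ, one_pow]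
  rw [← Complex.inv_eq_conj habs]
  exact (eq_inv_of_mul_eq_one_left h1).symm

lemma one_le_hammingBallVol (n q r : ℕ) : 1 ≤ hammingBallVol n q r := by
  have h0 : (0 : ℕ) ∈ Finset.range (r + 1) := Finset.mem_range.mpr (Nat.succ_pos r)
  calc 1 = n.choose 0 * (q - 1) ^ 0 := by simp
    _ ≤ _ := Finset.single_le_sum (f := fun w => n.choose w * (q-1)^w)
        (fun _ _ => Nat.zero_le _) h0

lemma hammingNorm_neg' {n q : ℕ} [NeZero q] (a : Fin n → ZMod q) :
    hammingNorm (-a) = hammingNorm a := by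
  unfold hammingNorm
  congr 1
  apply Finset.filter_congr
  intro i _
  simp [neg_eq_zero]

/-- Counting: the number of strings of weight `≤ r` is at most the ball volume. -/
lemma card_wt_le (n q r : ℕ) [NeZero q] :
    (univ.filter fun b : Fin n → ZMod q => hammingNorm b ≤ r).card ≤ hammingBallVol n q r := by
  classical
  set T := (Finset.range (r+1)).sigma
      (fun w => (Finset.powersetCard w (univ : Finset (Fin n))).sigma
        (fun S => (univ : Finset (↥S → {x : ZMod q // x ≠ 0})))) with hT
  have hcardT : T.card = hammingBallVol n q r := by
    rw [hT, Finset.card_sigma]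
    refine Finset.sum_congr rfl fun w _ => ?_
    rw [Finset.card_sigma]
    have : ∀ S ∈ Finset.powersetCard w (univ : Finset (Fin n)),
        (univ : Finset (↥S → {x : ZMod q // x ≠ 0})).card = (q-1)^w := by
      intro S hS
      rw [Finset.card_univ, Fintype.card_fun, Fintype.card_coe,
        (Finset.mem_powersetCard_univ.mp hS)]
      congr 1
      rw [Fintype.card_subtype_compl]
      simp [ZMod.card]
    rw [Finset.sum_congr rfl this, Finset.sum_const, Finset.card_powersetCard,
      Finset.card_univ, Fintype.card_fin, smul_eq_mul]
  rw [← hcardT]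
  apply Finset.card_le_card_of_injOn
    (fun b => ⟨hammingNorm b, ⟨univ.filter (fun i => b i ≠ 0),
      fun i => ⟨b i.1, (Finset.mem_filter.mp i.2).2⟩⟩⟩)
  · intro b hb
    simp only [Finset.coe_filter, Finset.mem_filter, Finset.mem_univ, true_and, Set.mem_setOf_eq] at hb
    rw [Finset.mem_coe, hT, Finset.mem_sigma]
    constructor
    · exact Finset.mem_range.mpr (Nat.lt_succ_of_le hb)
    rw [Finset.mem_sigma]
    exact ⟨Finset.mem_powersetCard_univ.mpr rfl, Finset.mem_univ _⟩
  · intro b _ b' _ h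
    have key : ∀ (x : Fin n → ZMod q) (i : Fin n),
        x i = (if hi : i ∈ (univ.filter (fun j => x j ≠ 0)) then
          ((fun j : ↥(univ.filter (fun j => x j ≠ 0)) =>
            (⟨x j.1, (Finset.mem_filter.mp j.2).2⟩ : {y : ZMod q // y ≠ 0})) ⟨i, hi⟩).1
          else 0) := by
      intro x i
      by_cases hx : x i = 0
      · rw [dif_neg]; exact hx
        simp [hx]
      · rw [dif_pos]
        simp [hx]
    funext i
    rw [key b i, key b' i]
    have h2 := congrArg (fun p : (Σ _w : ℕ, Σ S : Finset (Fin n), (↥S → {x : ZMod q // x ≠ 0})) =>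
      (fun j : Fin n => if hj : j ∈ p.2.1 then (p.2.2 ⟨j, hj⟩).1 else 0)) h
    exact congrFun h2 i

/-- Counting: there are at least `2^n` strings with all letters in `{1,2}`. -/
lemma two_pow_le_card_X (n q : ℕ) [NeZero q] (hq2 : (1 : ZMod q) ≠ 2) :
    2 ^ n ≤ (univ.filter fun c : Fin n → ZMod q => ∀ i, c i = 1 ∨ c i = 2).card := by
  classical
  have := Finset.card_le_card_of_injOn
    (s := (univ : Finset (Fin n → Bool)))
    (t := univ.filter fun c : Fin n → ZMod q => ∀ i, c i = 1 ∨ c i = 2)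
    (fun b => fun i => if b i then 1 else 2)
    (by
      intro b _
      simp only [Finset.coe_filter, Finset.mem_filter, Finset.mem_univ, true_and, Set.mem_setOf_eq]
      intro i
      by_cases hb : b i <;> simp [hb])
    (by
      intro b _ b' _ h
      funext i
      have := congrFun h i
      by_cases hb : b i <;> by_cases hb' : b' i <;>
        simp_all)
  simpa using this

/-- Ball bound inside the `{1,2}`-cube. -/
lemma card_ball_le (n q r : ℕ) [NeZero q] (c : Fin n → ZMod q)
    (hc : ∀ i, c i = 1 ∨ c i = 2) :
    ((univ.filter fun x : Fin n → ZMod q => ∀ i, x i = 1 ∨ x i = 2).filter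
      fun x => hammingDist x c ≤ r).card ≤ hammingBallVol n 2 r := by
  classical
  set T := (Finset.range (r+1)).sigma
      (fun w => Finset.powersetCard w (univ : Finset (Fin n))) with hT
  have hcardT : T.card = hammingBallVol n 2 r := by
    rw [hT, Finset.card_sigma]
    unfold hammingBallVol
    refine Finset.sum_congr rfl fun w _ => ?_
    rw [Finset.card_powersetCard, Finset.card_univ, Fintype.card_fin]
    simp
  rw [← hcardT]
  apply Finset.card_le_card_of_injOn
    (fun x => (⟨hammingDist x c, univ.filter (fun i => x i ≠ c i)⟩ : Σ _w : ℕ, Finset (Fin n)))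
  · intro x hx
    simp only [Finset.coe_filter, Finset.mem_filter, Finset.mem_univ, true_and, Set.mem_setOf_eq] at hx
    rw [Finset.mem_coe, hT, Finset.mem_sigma]
    exact ⟨Finset.mem_range.mpr (Nat.lt_succ_of_le hx.2), Finset.mem_powersetCard_univ.mpr rfl⟩
  · intro x hx x' hx' h
    simp only [Finset.coe_filter, Finset.mem_filter, Finset.mem_univ, true_and,
      Set.mem_setOf_eq] at hx hx'
    have hS := congrArg (fun p : Σ _w : ℕ, Finset (Fin n) => p.2) h
    simp only at hS
    funext i
    have hmem : (i ∈ univ.filter fun j => x j ≠ c j) ↔ (i ∈ univ.filter fun j => x' j ≠ c j) := by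
      rw [hS]
    simp only [Finset.mem_filter, Finset.mem_univ, true_and] at hmem
    by_cases hxi : x i = c i
    · have hx'i : x' i = c i := by
        by_contra hne
        exact (hmem.mpr hne) hxi
      rw [hxi, hx'i]
    · have hx'i : x' i ≠ c i := hmem.mp hxi
      rcases hc i with hc1 | hc1
      · have e1 : x i = 2 := (hx.1 i).resolve_left (by rw [hc1] at hxi; exact hxi)
        have e2 : x' i = 2 := (hx'.1 i).resolve_left (by rw [hc1] at hx'i; exact hx'i)
        rw [e1, e2]
      · have e1 : x i = 1 := (hx.1 i).resolve_right (by rw [hc1] at hxi; exact hxi)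
        have e2 : x' i = 1 := (hx'.1 i).resolve_right (by rw [hc1] at hx'i; exact hx'i)
        rw [e1, e2]

/-- Gilbert–Varshamov greedy bound inside the `{1,2}`-cube. -/
lemma gv_code (n q t : ℕ) [NeZero q] :
    ∃ C : Finset (Fin n → ZMod q),
      (∀ c ∈ C, ∀ i, c i = 1 ∨ c i = 2) ∧
      (∀ c ∈ C, ∀ c' ∈ C, c ≠ c' → 2*t+1 ≤ hammingDist c c') ∧
      (univ.filter fun c : Fin n → ZMod q => ∀ i, c i = 1 ∨ c i = 2).card
        ≤ C.card * hammingBallVol n 2 (2*t) := by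
  classical
  set X := univ.filter fun c : Fin n → ZMod q => ∀ i, c i = 1 ∨ c i = 2 with hX
  set P := X.powerset.filter
      (fun D => ∀ c ∈ D, ∀ c' ∈ D, c ≠ c' → 2*t+1 ≤ hammingDist c c') with hP
  have hPne : P.Nonempty := ⟨∅, by simp [hP]⟩
  obtain ⟨D, hDP, hmax⟩ := Finset.exists_max_image P Finset.card hPne
  simp only [hP, Finset.mem_filter, Finset.mem_powerset] at hDP
  obtain ⟨hDX, hDgood⟩ := hDP
  refine ⟨D, fun c hc => (Finset.mem_filter.mp (hDX hc)).2, hDgood, ?_⟩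
  have hcover : X ⊆ D.biUnion (fun c => X.filter (fun x => hammingDist x c ≤ 2*t)) := by
    intro x hx
    rw [Finset.mem_biUnion]
    by_contra hnot
    push_neg at hnot
    have hfar : ∀ c ∈ D, 2*t < hammingDist x c := by
      intro c hc
      have := hnot c hc
      rw [Finset.mem_filter] at this
      push_neg at this
      exact this hx
    have hxD : x ∉ D := by
      intro hxD
      have := hfar x hxD
      simp [hammingDist_self] at this
    have hins : insert x D ∈ P := by
      rw [hP, Finset.mem_filter, Finset.mem_powerset]
      constructor
      · exact Finset.insert_subset hx hDX
      · intro c hc c' hc' hne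
        rcases Finset.mem_insert.mp hc with hcx | hcD
        · rcases Finset.mem_insert.mp hc' with hcx' | hcD'
          · exact absurd (hcx.trans hcx'.symm) hne
          · subst hcx; exact hfar c' hcD'
        · rcases Finset.mem_insert.mp hc' with hcx' | hcD'
          · subst hcx'; rw [hammingDist_comm]; exact hfar c hcD
          · exact hDgood c hcD c' hcD' hne
    have := hmax _ hins
    rw [Finset.card_insert_of_notMem hxD] at this
    omega
  calc X.card ≤ (D.biUnion (fun c => X.filter (fun x => hammingDist x c ≤ 2*t))).card :=
        Finset.card_le_card hcover
    _ ≤ ∑ c ∈ D, (X.filter (fun x => hammingDist x c ≤ 2*t)).card := Finset.card_biUnion_le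
    _ ≤ ∑ _c ∈ D, hammingBallVol n 2 (2*t) := by
        apply Finset.sum_le_sum
        intro c hc
        exact card_ball_le n q (2*t) c (fun i => (Finset.mem_filter.mp (hDX hc)).2 i)
    _ = D.card * hammingBallVol n 2 (2*t) := by rw [Finset.sum_const, smul_eq_mul]

/-- Existence of a real vector in the kernel of all low-weight character sums. -/
lemma exists_real_kernel (n q : ℕ) [NeZero q] (C B : Finset (Fin n → ZMod q))
    (hBneg : ∀ b ∈ B, -b ∈ B) (hlt : B.card < C.card) :
    ∃ m : (Fin n → ZMod q) → ℝ, (∃ c ∈ C, m c ≠ 0) ∧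
      ∀ b ∈ B, ∑ c ∈ C, (m c : ℂ) * chiQ q (∑ i, b i * c i) = 0 := by
  classical
  set Φ : (↥C → ℂ) →ₗ[ℂ] (↥B → ℂ) :=
    { toFun := fun μ => fun b => ∑ c : ↥C, μ c * chiQ q (∑ i, (b : Fin n → ZMod q) i * (c : Fin n → ZMod q) i)
      map_add' := by
        intro μ ν; funext b; simp [add_mul, Finset.sum_add_distrib]
      map_smul' := by
        intro r μ; funext b; simp [Finset.mul_sum, mul_assoc] } with hΦ
  have hnotinj : ¬ Function.Injective Φ := by
    intro hinj
    have := LinearMap.finrank_le_finrank_of_injective hinj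
    rw [Module.finrank_fintype_fun_eq_card, Module.finrank_fintype_fun_eq_card,
      Fintype.card_coe, Fintype.card_coe] at this
    omega
  obtain ⟨μ, ν, hμν, hne⟩ := Function.not_injective_iff.mp hnotinj
  set μ0 : ↥C → ℂ := μ - ν with hμ0
  have hμ0ne : μ0 ≠ 0 := sub_ne_zero.mpr hne
  have hker : ∀ b : ↥B, ∑ c : ↥C, μ0 c * chiQ q (∑ i, (b : Fin n → ZMod q) i * (c : Fin n → ZMod q) i) = 0 := by
    intro b
    have : Φ μ0 = 0 := by rw [hμ0, map_sub, hμν, sub_self]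
    exact congrFun this b
  -- conjugate is also in the kernel
  have hkerconj : ∀ b : ↥B, ∑ c : ↥C,
      (starRingEnd ℂ) (μ0 c) * chiQ q (∑ i, (b : Fin n → ZMod q) i * (c : Fin n → ZMod q) i) = 0 := by
    intro b
    have hbneg : -(b : Fin n → ZMod q) ∈ B := hBneg _ b.2
    have h1 := hker ⟨-(b : Fin n → ZMod q), hbneg⟩
    have h2 := congrArg (starRingEnd ℂ) h1
    rw [map_sum, map_zero] at h2
    rw [← h2]
    apply Finset.sum_congr rfl
    intro c _
    rw [map_mul, conj_chiQ]
    congr 2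
    simp [neg_mul, Finset.sum_neg_distrib]
  -- extract a real kernel vector
  obtain ⟨c₀, hc₀⟩ := Function.ne_iff.mp hμ0ne
  have main : ∀ m0 : ↥C → ℝ,
      (∀ b : ↥B, ∑ c : ↥C, (m0 c : ℂ) * chiQ q (∑ i, (b : Fin n → ZMod q) i * (c : Fin n → ZMod q) i) = 0) →
      (m0 c₀ ≠ 0) →
      ∃ m : (Fin n → ZMod q) → ℝ, (∃ c ∈ C, m c ≠ 0) ∧
        ∀ b ∈ B, ∑ c ∈ C, (m c : ℂ) * chiQ q (∑ i, b i * c i) = 0 := by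
    intro m0 hm0 hm0ne
    refine ⟨fun c => if h : c ∈ C then m0 ⟨c, h⟩ else 0, ⟨c₀, c₀.2, by simp [c₀.2, hm0ne]⟩, ?_⟩
    intro b hb
    have := hm0 ⟨b, hb⟩
    rw [← Finset.sum_attach C (fun c => ((if h : c ∈ C then m0 ⟨c, h⟩ else 0 : ℝ) : ℂ) * chiQ q (∑ i, b i * c i))]
    rw [← this]
    rw [← Finset.univ_eq_attach]
    apply Finset.sum_congr rfl
    intro c _
    simp [c.2]
  by_cases hre : (μ0 c₀).re ≠ 0
  · apply main (fun c => (μ0 c).re) _ hre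
    intro b
    have h1 := hker b
    have h2 := hkerconj b
    have := congrArg₂ (· + ·) h1 h2
    simp only [add_zero] at this
    rw [← Finset.sum_add_distrib] at this
    have key : ∀ c : ↥C, (((μ0 c).re : ℂ)) * chiQ q (∑ i, (b : Fin n → ZMod q) i * (c : Fin n → ZMod q) i)
        = (2:ℂ)⁻¹ * ((μ0 c * chiQ q (∑ i, (b : Fin n → ZMod q) i * (c : Fin n → ZMod q) i))
          + (starRingEnd ℂ) (μ0 c) * chiQ q (∑ i, (b : Fin n → ZMod q) i * (c : Fin n → ZMod q) i)) := by
      intro c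
      rw [← add_mul, Complex.add_conj]
      push_cast
      ring
    rw [Finset.sum_congr rfl (fun c _ => key c), ← Finset.mul_sum, this, mul_zero]
  · push_neg at hre
    have him : (μ0 c₀).im ≠ 0 := by
      intro h
      apply hc₀
      apply Complex.ext <;> simp [hre, h]
    apply main (fun c => (μ0 c).im) _ him
    intro b
    have h1 := hker b
    have h2 := hkerconj b
    have := congrArg₂ (· - ·) h1 h2
    simp only [sub_zero] at this
    rw [← Finset.sum_sub_distrib] at this
    have key : ∀ c : ↥C, (((μ0 c).im : ℂ)) * chiQ q (∑ i, (b : Fin n → ZMod q) i * (c : Fin n → ZMod q) i)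
        = ((2:ℂ) * Complex.I)⁻¹ * ((μ0 c * chiQ q (∑ i, (b : Fin n → ZMod q) i * (c : Fin n → ZMod q) i))
          - (starRingEnd ℂ) (μ0 c) * chiQ q (∑ i, (b : Fin n → ZMod q) i * (c : Fin n → ZMod q) i)) := by
      intro c
      rw [← sub_mul, Complex.sub_conj]
      field_simp [Complex.I_ne_zero]
      push_cast
      ring
    rw [Finset.sum_congr rfl (fun c _ => key c), ← Finset.mul_sum, this, mul_zero]

lemma pauliXZ_apply (n q : ℕ) [NeZero q] (a b : Fin n → ZMod q)
    (ψ : EuclideanSpace ℂ (Fin n → ZMod q)) (d : Fin n → ZMod q) :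
    pauliXZ n q a b ψ d = omegaQ q ^ (∑ i, b i * (d i + a i)).val * ψ (d + a) := rfl

lemma sum_single_apply {ι : Type*} [Fintype ι] [DecidableEq ι] (s : Finset ι) (γ : ι → ℝ) (d : ι) :
    (∑ c ∈ s, ((γ c : ℝ) : ℂ) • EuclideanSpace.single c (1:ℂ)) d = if d ∈ s then (γ d : ℂ) else 0 := by
  rw [WithLp.ofLp_sum, Finset.sum_apply]
  simp only [PiLp.smul_apply, EuclideanSpace.single_apply, smul_eq_mul, mul_ite, mul_one, mul_zero]
  simp [Finset.sum_ite_eq']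

lemma inner_eval {ι : Type*} [Fintype ι] (x y : EuclideanSpace ℂ ι) :
    (inner ℂ x y : ℂ) = ∑ d, (starRingEnd ℂ) (x d) * y d := by
  rw [PiLp.inner_apply]
  simp [RCLike.inner_apply, mul_comm]

lemma dist_self_add {n q : ℕ} [NeZero q] (d a : Fin n → ZMod q) :
    hammingDist d (d + a) = hammingNorm a := by
  rw [hammingDist_eq_hammingNorm]
  have : -d + (d + a) = a := by ring
  rw [this]

lemma nat_lt_two_mul {a : ℕ} (h : 1 ≤ a) : a < 2 * a := by omega

lemma nat_contr {x y : ℕ} (h1 : y + 1 ≤ x) (h2 : x ≤ y) : False := by omega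

/-- Finite core of the linear-distance ground-space code theorem. -/
theorem stmt_19 (s t n : ℕ) (hs : 1 ≤ s) (ht : 1 ≤ t) (hn : 1 ≤ n)
    (htn : 2 * t + 1 ≤ n) (q : ℕ) (hq : q = 2 * s + 1) [NeZero q]
    (hcard : 2 * hammingBallVol n 2 (2 * t) * hammingBallVol n q (2 * t) ≤ 2 ^ n) :
    ∃ C : Finset (Fin n → ZMod q),
      (∀ c ∈ C, ∀ i : Fin n, c i = 1 ∨ c i = 2) ∧
      ∃ C0 C1 : Finset (Fin n → ZMod q), C0 ⊆ C ∧ C1 ⊆ C ∧ Disjoint C0 C1 ∧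
        C0.Nonempty ∧ C1.Nonempty ∧
        ∃ α β : (Fin n → ZMod q) → ℝ,
          (∀ c ∈ C0, 0 ≤ α c) ∧ (∀ c ∈ C1, 0 ≤ β c) ∧
          (∑ c ∈ C0, (α c) ^ 2 = 1) ∧ (∑ c ∈ C1, (β c) ^ 2 = 1) ∧
          ∃ ψ0 ψ1 : EuclideanSpace ℂ (Fin n → ZMod q),
            ψ0 = ∑ c ∈ C0, ((α c : ℝ) : ℂ) • EuclideanSpace.single c (1 : ℂ) ∧
            ψ1 = ∑ c ∈ C1, ((β c : ℝ) : ℂ) • EuclideanSpace.single c (1 : ℂ) ∧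
            ∀ a b : Fin n → ZMod q,
              hammingNorm a ≤ 2 * t → hammingNorm b ≤ 2 * t →
                (inner ℂ ψ0 (pauliXZ n q a b ψ1) : ℂ) = 0 ∧
                (inner ℂ ψ0 (pauliXZ n q a b ψ0) : ℂ) = inner ℂ ψ1 (pauliXZ n q a b ψ1) := by
  classical
  have hq3 : 3 ≤ q := by omega
  have h12 : (1 : ZMod q) ≠ 2 := by
    intro h
    have h1 : ((1:ℕ) : ZMod q).val = 1 := ZMod.val_cast_of_lt (by omega)
    have h2 : ((2:ℕ) : ZMod q).val = 2 := ZMod.val_cast_of_lt (by omega)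
    rw [show ((1:ℕ):ZMod q) = (1:ZMod q) by norm_cast] at h1
    rw [show ((2:ℕ):ZMod q) = (2:ZMod q) by norm_cast] at h2
    rw [h, h2] at h1
    omega
  obtain ⟨C, hCgood, hCdist, hCcount⟩ := gv_code n q t
  have hV2pos : 1 ≤ hammingBallVol n 2 (2*t) := one_le_hammingBallVol _ _ _
  have hVqpos : 1 ≤ hammingBallVol n q (2*t) := one_le_hammingBallVol _ _ _
  have hClarge : 2 * hammingBallVol n q (2*t) ≤ C.card := by
    have h1 : 2 * hammingBallVol n q (2*t) * hammingBallVol n 2 (2*t)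
        ≤ C.card * hammingBallVol n 2 (2*t) := by
      calc 2 * hammingBallVol n q (2*t) * hammingBallVol n 2 (2*t)
          = 2 * hammingBallVol n 2 (2*t) * hammingBallVol n q (2*t) := by ring
        _ ≤ 2^n := hcard
        _ ≤ _ := two_pow_le_card_X n q h12
        _ ≤ C.card * hammingBallVol n 2 (2*t) := hCcount
    exact Nat.le_of_mul_le_mul_right h1 (Nat.lt_of_lt_of_le Nat.zero_lt_one hV2pos)
  set B := univ.filter (fun b : Fin n → ZMod q => hammingNorm b ≤ 2*t) with hB
  have hBneg : ∀ b ∈ B, -b ∈ B := by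
    intro b hb
    rw [hB, Finset.mem_filter] at hb ⊢
    exact ⟨Finset.mem_univ _, by rw [hammingNorm_neg']; exact hb.2⟩
  have hBC : B.card < C.card := by
    have h := card_wt_le n q (2*t)
    rw [← hB] at h
    exact lt_of_le_of_lt h (lt_of_lt_of_le (nat_lt_two_mul hVqpos) hClarge)
  obtain ⟨m, ⟨c₀, hc₀C, hc₀⟩, hker⟩ := exists_real_kernel n q C B hBneg hBC
  have hker' : ∀ b : Fin n → ZMod q, hammingNorm b ≤ 2*t →
      ∑ c ∈ C, (m c : ℂ) * chiQ q (∑ i, b i * c i) = 0 := by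
    intro b hb
    exact hker b (by rw [hB, Finset.mem_filter]; exact ⟨Finset.mem_univ _, hb⟩)
  have hsum0 : ∑ c ∈ C, m c = 0 := by
    have h0 := hker' 0 (by simp [hammingNorm])
    simp only [Pi.zero_apply, zero_mul, Finset.sum_const_zero, chiQ_zero, mul_one] at h0
    exact_mod_cast h0
  set C0 := C.filter (fun c => 0 < m c) with hC0
  set C1 := C.filter (fun c => m c < 0) with hC1
  have hC0sub : C0 ⊆ C := Finset.filter_subset _ _
  have hC1sub : C1 ⊆ C := Finset.filter_subset _ _
  have hdisj : Disjoint C0 C1 := by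
    rw [Finset.disjoint_left]
    intro c h0 h1
    rw [hC0, Finset.mem_filter] at h0
    rw [hC1, Finset.mem_filter] at h1
    linarith [h0.2, h1.2]
  have hC0ne : C0.Nonempty := by
    rw [Finset.nonempty_iff_ne_empty]
    intro hemp
    have hall : ∀ c ∈ C, m c ≤ 0 := by
      intro c hc
      by_contra hpos
      push_neg at hpos
      have : c ∈ C0 := by rw [hC0, Finset.mem_filter]; exact ⟨hc, hpos⟩
      simp [hemp] at this
    exact hc₀ ((Finset.sum_eq_zero_iff_of_nonpos hall).mp hsum0 c₀ hc₀C)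
  have hC1ne : C1.Nonempty := by
    rw [Finset.nonempty_iff_ne_empty]
    intro hemp
    have hall : ∀ c ∈ C, 0 ≤ m c := by
      intro c hc
      by_contra hneg
      push_neg at hneg
      have : c ∈ C1 := by rw [hC1, Finset.mem_filter]; exact ⟨hc, hneg⟩
      simp [hemp] at this
    exact hc₀ ((Finset.sum_eq_zero_iff_of_nonneg hall).mp hsum0 c₀ hc₀C)
  set P := ∑ c ∈ C0, m c with hPdef
  have hPpos : 0 < P :=
    Finset.sum_pos (fun c hc => (Finset.mem_filter.mp hc).2) hC0ne
  have hzero_out : ∀ c ∈ C, c ∉ C0 ∪ C1 → m c = 0 := by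
    intro c hc hcn
    rw [Finset.mem_union, hC0, hC1, Finset.mem_filter, Finset.mem_filter] at hcn
    push_neg at hcn
    have := hcn.1 hc
    have := hcn.2 hc
    linarith
  have hsplit : P + ∑ c ∈ C1, m c = 0 := by
    rw [hPdef, ← Finset.sum_union hdisj, ← hsum0]
    exact Finset.sum_subset (Finset.union_subset hC0sub hC1sub)
      (fun c hc hcn => hzero_out c hc hcn)
  have hC1sum : ∑ c ∈ C1, m c = -P := by linarith
  have hsplitχ : ∀ b : Fin n → ZMod q, hammingNorm b ≤ 2*t →
      ∑ c ∈ C0, (m c : ℂ) * chiQ q (∑ i, b i * c i)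
        + ∑ c ∈ C1, (m c : ℂ) * chiQ q (∑ i, b i * c i) = 0 := by
    intro b hb
    rw [← Finset.sum_union hdisj, ← hker' b hb]
    exact Finset.sum_subset (Finset.union_subset hC0sub hC1sub)
      (fun c hc hcn => by rw [hzero_out c hc hcn]; simp)
  set α : (Fin n → ZMod q) → ℝ := fun c => Real.sqrt (m c / P) with hα
  set β : (Fin n → ZMod q) → ℝ := fun c => Real.sqrt (-(m c) / P) with hβ
  have hα2 : ∀ c ∈ C0, (α c)^2 = m c / P := by
    intro c hc
    rw [hα]
    exact Real.sq_sqrt (div_nonneg (le_of_lt (Finset.mem_filter.mp hc).2) hPpos.le)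
  have hβ2 : ∀ c ∈ C1, (β c)^2 = -(m c) / P := by
    intro c hc
    rw [hβ]
    exact Real.sq_sqrt (div_nonneg (by linarith [(Finset.mem_filter.mp hc).2]) hPpos.le)
  refine ⟨C, hCgood, C0, C1, hC0sub, hC1sub, hdisj, hC0ne, hC1ne, α, β,
    fun c _ => Real.sqrt_nonneg _, fun c _ => Real.sqrt_nonneg _, ?_, ?_,
    ∑ c ∈ C0, ((α c : ℝ) : ℂ) • EuclideanSpace.single c (1 : ℂ),
    ∑ c ∈ C1, ((β c : ℝ) : ℂ) • EuclideanSpace.single c (1 : ℂ), rfl, rfl, ?_⟩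
  · calc ∑ c ∈ C0, (α c)^2 = ∑ c ∈ C0, m c / P := Finset.sum_congr rfl hα2
      _ = (∑ c ∈ C0, m c) / P := by rw [Finset.sum_div]
      _ = 1 := by rw [← hPdef, div_self hPpos.ne']
  · calc ∑ c ∈ C1, (β c)^2 = ∑ c ∈ C1, -(m c) / P := Finset.sum_congr rfl hβ2
      _ = (∑ c ∈ C1, -(m c)) / P := by rw [Finset.sum_div]
      _ = 1 := by rw [Finset.sum_neg_distrib, hC1sum, neg_neg, div_self hPpos.ne']
  intro a b ha hb
  have hψ0 : ∀ d, (∑ c ∈ C0, ((α c : ℝ) : ℂ) • EuclideanSpace.single c (1:ℂ)) d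
      = if d ∈ C0 then ((α d : ℝ) : ℂ) else 0 := sum_single_apply C0 α
  have hψ1 : ∀ d, (∑ c ∈ C1, ((β c : ℝ) : ℂ) • EuclideanSpace.single c (1:ℂ)) d
      = if d ∈ C1 then ((β d : ℝ) : ℂ) else 0 := sum_single_apply C1 β
  have hfar : ∀ d : Fin n → ZMod q, d ∈ C → d + a ∈ C → d ≠ d + a → False := by
    intro d hd hda hne
    have h1 := hCdist d hd (d+a) hda hne
    rw [dist_self_add] at h1
    exact nat_contr h1 ha
  constructor
  · -- cross term
    rw [inner_eval]
    apply Finset.sum_eq_zero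
    intro d _
    rw [pauliXZ_apply, hψ0 d, hψ1 (d+a)]
    by_cases hd : d ∈ C0
    · by_cases hda : d + a ∈ C1
      · exfalso
        apply hfar d (hC0sub hd) (hC1sub hda)
        intro he
        exact Finset.disjoint_left.mp hdisj hd (by rw [he]; exact hda)
      · simp [hd, hda]
    · simp [hd]
  · -- diagonal terms
    by_cases haz : a = 0
    · subst haz
      have eval : ∀ (D : Finset (Fin n → ZMod q)) (γ : (Fin n → ZMod q) → ℝ),
          (inner ℂ (∑ c ∈ D, ((γ c : ℝ) : ℂ) • EuclideanSpace.single c (1:ℂ))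
            (pauliXZ n q 0 b (∑ c ∈ D, ((γ c : ℝ) : ℂ) • EuclideanSpace.single c (1:ℂ))) : ℂ)
          = ∑ c ∈ D, ((γ c : ℝ)^2 : ℂ) * chiQ q (∑ i, b i * c i) := by
        intro D γ
        rw [inner_eval]
        have hD := sum_single_apply D γ
        have step : ∀ d, (starRingEnd ℂ) ((∑ c ∈ D, ((γ c : ℝ) : ℂ) • EuclideanSpace.single c (1:ℂ)) d)
            * (pauliXZ n q 0 b (∑ c ∈ D, ((γ c : ℝ) : ℂ) • EuclideanSpace.single c (1:ℂ)) d)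
            = if d ∈ D then ((γ d : ℝ)^2 : ℂ) * chiQ q (∑ i, b i * d i) else 0 := by
          intro d
          rw [pauliXZ_apply, add_zero, hD d]
          by_cases hd : d ∈ D
          · rw [if_pos hd, if_pos hd, Complex.conj_ofReal]
            have : (∑ i, b i * (d i + (0 : Fin n → ZMod q) i)) = ∑ i, b i * d i := by
              simp
            rw [this]
            unfold chiQ
            push_cast
            ring
          · rw [if_neg hd, if_neg hd, map_zero, zero_mul]
        rw [Finset.sum_congr rfl (fun d _ => step d)]
        rw [Finset.sum_ite_mem, Finset.univ_inter]
      rw [eval C0 α, eval C1 β]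
      have lhs_eq : ∑ c ∈ C0, ((α c : ℝ)^2 : ℂ) * chiQ q (∑ i, b i * c i)
          = ((P:ℝ):ℂ)⁻¹ * ∑ c ∈ C0, (m c : ℂ) * chiQ q (∑ i, b i * c i) := by
        rw [Finset.mul_sum]
        apply Finset.sum_congr rfl
        intro c hc
        simp only [← Complex.ofReal_pow]
        rw [hα2 c hc]
        push_cast
        rw [div_eq_mul_inv]
        ring
      have rhs_eq : ∑ c ∈ C1, ((β c : ℝ)^2 : ℂ) * chiQ q (∑ i, b i * c i)
          = ((P:ℝ):ℂ)⁻¹ * -(∑ c ∈ C1, (m c : ℂ) * chiQ q (∑ i, b i * c i)) := by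
        calc ∑ c ∈ C1, ((β c : ℝ)^2 : ℂ) * chiQ q (∑ i, b i * c i)
            = ∑ c ∈ C1, ((P:ℝ):ℂ)⁻¹ * (-((m c : ℝ):ℂ) * chiQ q (∑ i, b i * c i)) := by
              apply Finset.sum_congr rfl
              intro c hc
              simp only [← Complex.ofReal_pow]
              rw [hβ2 c hc]
              push_cast
              rw [div_eq_mul_inv]
              ring
          _ = ((P:ℝ):ℂ)⁻¹ * ∑ c ∈ C1, (-((m c:ℝ):ℂ) * chiQ q (∑ i, b i * c i)) :=
              (Finset.mul_sum _ _ _).symm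
          _ = ((P:ℝ):ℂ)⁻¹ * -(∑ c ∈ C1, ((m c:ℝ):ℂ) * chiQ q (∑ i, b i * c i)) := by
              simp only [neg_mul, Finset.sum_neg_distrib]
      rw [lhs_eq, rhs_eq]
      congr 1
      exact eq_neg_of_add_eq_zero_left (hsplitχ b hb)
    · -- a ≠ 0 : both sides vanish
      have diag0 : ∀ (D : Finset (Fin n → ZMod q)) (γ : (Fin n → ZMod q) → ℝ), D ⊆ C →
          (inner ℂ (∑ c ∈ D, ((γ c : ℝ) : ℂ) • EuclideanSpace.single c (1:ℂ))
            (pauliXZ n q a b (∑ c ∈ D, ((γ c : ℝ) : ℂ) • EuclideanSpace.single c (1:ℂ))) : ℂ) = 0 := by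
        intro D γ hDC
        rw [inner_eval]
        apply Finset.sum_eq_zero
        intro d _
        have hD := sum_single_apply D γ
        rw [pauliXZ_apply, hD d, hD (d+a)]
        by_cases hd : d ∈ D
        · by_cases hda : d + a ∈ D
          · exfalso
            apply hfar d (hDC hd) (hDC hda)
            intro he
            exact haz ((left_eq_add.mp he))
          · simp [hd, hda]
        · simp [hd]
      rw [diag0 C0 α hC0sub, diag0 C1 β hC1sub]
end
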